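/- The variant Earley algorithm is correct: the string w = a_1⋯a_n is in the language of G if and only if [α] ∈ T_{0,n} for some production S → α ∈ P. -/

import Mathlib

/-! Formalization of Earley parsing and the Nederhof–Satta variant. -/

variable {T N : Type}

/-- A context-free grammar: a start nonterminal and a set of productions. -/
structure CFG (T N : Type) where
  initial : N
  rules : Set (N × List (Symbol T N))

/-- One rewriting step of the grammar. -/
def CFG.Produces (g : CFG T N) (u v : List (Symbol T N)) : Prop :=
  ∃ A α p q, (A, α) ∈ g.rules ∧ u = p ++ [Symbol.nonterminal A] ++ q ∧ v = p ++ α ++ q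

/-- The derivation relation ⇒* (reflexive-transitive closure of rewriting). -/
def CFG.Derives (g : CFG T N) : List (Symbol T N) → List (Symbol T N) → Prop :=
  Relation.ReflTransGen g.Produces

/-- The language of the grammar: { w | S ⇒* w }. -/
def CFG.language (g : CFG T N) : Set (List T) :=
  { w | g.Derives [Symbol.nonterminal g.initial] (w.map Symbol.terminal) }

/-- `inputSlice w i j` is the substring a_{i+1}⋯a_j of `w` (0-based: w[i..j)), as symbols. -/
def inputSlice (w : List T) (i j : ℕ) : List (Symbol T N) :=
  ((w.take j).drop i).map Symbol.terminal

/-- The least Earley table: `Earley g w A α β i j` means the dotted item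
[A → α • β] is inserted in E_{i,j}. -/
inductive Earley (g : CFG T N) (w : List T) :
    N → List (Symbol T N) → List (Symbol T N) → ℕ → ℕ → Prop where
  | init {α} : (g.initial, α) ∈ g.rules → Earley g w g.initial [] α 0 0
  | predict {B α A β i j γ} : Earley g w B α (Symbol.nonterminal A :: β) i j →
      (A, γ) ∈ g.rules → Earley g w A [] γ j j
  | scan {A α a β i j} : Earley g w A α (Symbol.terminal a :: β) i j →
      w[j]? = some a → Earley g w A (α ++ [Symbol.terminal a]) β i (j + 1)
  | complete {A α B β i k γ j} : Earley g w A α (Symbol.nonterminal B :: β) i k →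
      Earley g w B γ [] k j → (B, γ) ∈ g.rules →
      Earley g w A (α ++ [Symbol.nonterminal B]) β i j

mutual
  /-- Forward part of the variant: `VarU g w β j` means suffix item [β] ∈ U_j. -/
  inductive VarU (g : CFG T N) (w : List T) : List (Symbol T N) → ℕ → Prop where
    | init {α} : (g.initial, α) ∈ g.rules → VarU g w α 0
    | predict {A β j γ} : VarU g w (Symbol.nonterminal A :: β) j →
        (A, γ) ∈ g.rules → VarU g w γ j
    | scan {a β j} : VarU g w (Symbol.terminal a :: β) j → w[j]? = some a →
        VarU g w β (j + 1)
    | complete {B β k γ j} : VarU g w (Symbol.nonterminal B :: β) k → (B, γ) ∈ g.rules →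
        VarT g w γ k j → VarU g w β j

  /-- Backward part of the variant: `VarT g w β j m` means suffix item [β] ∈ T_{j,m}. -/
  inductive VarT (g : CFG T N) (w : List T) : List (Symbol T N) → ℕ → ℕ → Prop where
    | empty {m} : VarU g w [] m → VarT g w [] m m
    | scan {a β j m} : VarU g w (Symbol.terminal a :: β) j → w[j]? = some a →
        VarT g w β (j + 1) m → VarT g w (Symbol.terminal a :: β) j m
    | complete {B β k γ j m} : VarU g w (Symbol.nonterminal B :: β) k → (B, γ) ∈ g.rules →
        VarT g w γ k j → VarT g w β j m → VarT g w (Symbol.nonterminal B :: β) k m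
end


section Aux

variable {g : CFG T N} {w : List T}

/-- Counted derivations. -/
inductive DerivesIn (g : CFG T N) : ℕ → List (Symbol T N) → List (Symbol T N) → Prop
  | refl (u) : DerivesIn g 0 u u
  | head {n u v x} : g.Produces u v → DerivesIn g n v x → DerivesIn g (n + 1) u x

lemma DerivesIn.derives {n u v} (h : DerivesIn g n u v) : g.Derives u v := by
  induction h with
  | refl => exact Relation.ReflTransGen.refl
  | head h _ ih => exact Relation.ReflTransGen.head h ih

lemma CFG.Derives.derivesIn {u v} (h : g.Derives u v) : ∃ n, DerivesIn g n u v := by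
  induction h using Relation.ReflTransGen.head_induction_on with
  | refl => exact ⟨0, DerivesIn.refl _⟩
  | head h _ ih => obtain ⟨n, hn⟩ := ih; exact ⟨n + 1, DerivesIn.head h hn⟩

lemma CFG.Produces.exists_nt {u v} (h : g.Produces u v) : ∃ A, Symbol.nonterminal A ∈ u := by
  obtain ⟨A, α, p, q, _, hu, _⟩ := h
  exact ⟨A, by simp [hu]⟩

lemma CFG.Produces.append_left {u v} (h : g.Produces u v) (p : List (Symbol T N)) :
    g.Produces (p ++ u) (p ++ v) := by
  obtain ⟨A, α, p', q', hr, hu, hv⟩ := h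
  exact ⟨A, α, p ++ p', q', hr, by simp [hu], by simp [hv]⟩

lemma CFG.Produces.append_right {u v} (h : g.Produces u v) (q : List (Symbol T N)) :
    g.Produces (u ++ q) (v ++ q) := by
  obtain ⟨A, α, p', q', hr, hu, hv⟩ := h
  exact ⟨A, α, p', q' ++ q, hr, by simp [hu], by simp [hv]⟩

lemma CFG.Derives.append_left {u v} (h : g.Derives u v) (p : List (Symbol T N)) :
    g.Derives (p ++ u) (p ++ v) := by
  induction h with
  | refl => exact Relation.ReflTransGen.refl
  | tail _ h ih => exact Relation.ReflTransGen.tail ih (h.append_left p)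

lemma CFG.Derives.append_right {u v} (h : g.Derives u v) (q : List (Symbol T N)) :
    g.Derives (u ++ q) (v ++ q) := by
  induction h with
  | refl => exact Relation.ReflTransGen.refl
  | tail _ h ih => exact Relation.ReflTransGen.tail ih (h.append_right q)

lemma CFG.Derives.append {u v u' v'} (h : g.Derives u v) (h' : g.Derives u' v') :
    g.Derives (u ++ u') (v ++ v') :=
  Relation.ReflTransGen.trans (h.append_right u') (h'.append_left v)

lemma CFG.Produces.split {u v t : List (Symbol T N)} (h : g.Produces (u ++ v) t) :
    (∃ u', g.Produces u u' ∧ t = u' ++ v) ∨ (∃ v', g.Produces v v' ∧ t = u ++ v') := by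
  obtain ⟨A, α, p, q, hr, he, ht⟩ := h
  rw [List.append_assoc, List.append_eq_append_iff] at he
  rcases he with ⟨a', hp, hv⟩ | ⟨c', hu, hq⟩
  · right
    refine ⟨a' ++ α ++ q, ⟨A, α, a', q, hr, by rw [hv]; simp, by simp⟩, ?_⟩
    rw [ht, hp]; simp
  · cases c' with
    | nil =>
      right
      simp at hu hq
      refine ⟨α ++ q, ⟨A, α, [], q, hr, by simp [← hq], by simp⟩, ?_⟩
      rw [ht, hu]; simp
    | cons x xs =>
      left
      obtain ⟨hx, hq'⟩ := List.cons_eq_cons.mp (by simpa using hq)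
      refine ⟨p ++ α ++ xs, ⟨A, α, p, xs, hr, by rw [hu, ← hx]; simp, by simp⟩, ?_⟩
      rw [ht, hq']; simp

lemma derivesIn_split {n : ℕ} {x s u v : List (Symbol T N)}
    (h : DerivesIn g n x s) (hx : x = u ++ v) :
    ∃ n₁ n₂ s₁ s₂, n = n₁ + n₂ ∧ s = s₁ ++ s₂ ∧
      DerivesIn g n₁ u s₁ ∧ DerivesIn g n₂ v s₂ := by
  induction h generalizing u v with
  | refl => exact ⟨0, 0, u, v, rfl, hx, DerivesIn.refl u, DerivesIn.refl v⟩
  | @head n a b c hp _ ih =>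
    subst hx
    rcases hp.split with ⟨u', hu', hb⟩ | ⟨v', hv', hb⟩
    · obtain ⟨n₁, n₂, s₁, s₂, hn, hs, h₁, h₂⟩ := ih hb
      exact ⟨n₁ + 1, n₂, s₁, s₂, by omega, hs, DerivesIn.head hu' h₁, h₂⟩
    · obtain ⟨n₁, n₂, s₁, s₂, hn, hs, h₁, h₂⟩ := ih hb
      exact ⟨n₁, n₂ + 1, s₁, s₂, by omega, hs, h₁, DerivesIn.head hv' h₂⟩

lemma derivesIn_nil {n : ℕ} {s : List (Symbol T N)} (h : DerivesIn g n [] s) : s = [] := by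
  cases h with
  | refl => rfl
  | head hp _ => obtain ⟨A, hA⟩ := hp.exists_nt; simp at hA

lemma derivesIn_terminal {n : ℕ} {a : T} {s : List (Symbol T N)}
    (h : DerivesIn g n [Symbol.terminal a] s) : n = 0 ∧ s = [Symbol.terminal a] := by
  cases h with
  | refl => exact ⟨rfl, rfl⟩
  | head hp _ =>
    obtain ⟨A, hA⟩ := hp.exists_nt
    simp at hA

lemma derivesIn_nonterminal {n : ℕ} {B : N} {s : List (Symbol T N)}
    (h : DerivesIn g n [Symbol.nonterminal B] s)
    (hs : ∀ A : N, Symbol.nonterminal A ∉ s) :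
    ∃ γ n', (B, γ) ∈ g.rules ∧ n = n' + 1 ∧ DerivesIn g n' γ s := by
  cases h with
  | refl => exact ((hs B) (by simp)).elim
  | @head n' _ v _ hp hd =>
    obtain ⟨A, α, p, q, hr, he, hv⟩ := hp
    have hpq : p = [] ∧ q = [] := by
      have := congrArg List.length he
      simp at this
      constructor <;> [exact List.eq_nil_of_length_eq_zero (by omega);
        exact List.eq_nil_of_length_eq_zero (by omega)]
    obtain ⟨hp0, hq0⟩ := hpq
    subst hp0; subst hq0
    simp only [List.nil_append, List.append_nil] at he hv
    obtain rfl : B = A := by simpa using he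
    exact ⟨α, n', hr, rfl, hv ▸ hd⟩

/-! Slice lemmas. -/

lemma inputSlice_eq (w : List T) (i j : ℕ) :
    (inputSlice w i j : List (Symbol T N)) = ((w.drop i).take (j - i)).map Symbol.terminal := by
  simp [inputSlice, List.drop_take]

lemma inputSlice_self (w : List T) (m : ℕ) : (inputSlice w m m : List (Symbol T N)) = [] := by
  simp [inputSlice_eq]

lemma inputSlice_length (w : List T) (i j : ℕ) :
    (inputSlice w i j : List (Symbol T N)).length = min (j - i) (w.length - i) := by
  simp [inputSlice_eq]

lemma inputSlice_append (w : List T) {i j k : ℕ} (hij : i ≤ j) (hjk : j ≤ k) :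
    (inputSlice w i j : List (Symbol T N)) ++ inputSlice w j k = inputSlice w i k := by
  rw [inputSlice_eq, inputSlice_eq, inputSlice_eq, ← List.map_append]
  congr 1
  have h1 : w.drop j = (w.drop i).drop (j - i) := by
    rw [List.drop_drop]; congr 1; omega
  rw [h1, ← List.take_add]
  congr 1; omega

lemma inputSlice_cons (w : List T) {j m : ℕ} (hjn : j < w.length) (hjm : j < m) :
    (inputSlice w j m : List (Symbol T N)) =
      Symbol.terminal w[j] :: inputSlice w (j + 1) m := by
  rw [inputSlice_eq, inputSlice_eq, List.drop_eq_getElem_cons hjn]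
  have hmj : m - j = (m - (j + 1)) + 1 := by omega
  rw [hmj, List.take_succ_cons, List.map_cons]

lemma inputSlice_take (w : List T) {j m t : ℕ} (ht : t ≤ m - j) :
    (inputSlice w j m : List (Symbol T N)).take t = inputSlice w j (j + t) := by
  rw [inputSlice_eq, inputSlice_eq, ← List.map_take, List.take_take]
  congr 2; omega

lemma inputSlice_drop (w : List T) (j m t : ℕ) :
    (inputSlice w j m : List (Symbol T N)).drop t = inputSlice w (j + t) m := by
  rw [inputSlice_eq, inputSlice_eq, ← List.map_drop, List.drop_take, List.drop_drop]
  congr 2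
  omega

lemma nt_not_mem_inputSlice {A : N} {w : List T} {i j : ℕ} :
    Symbol.nonterminal A ∉ (inputSlice w i j : List (Symbol T N)) := by
  simp only [inputSlice_eq, List.mem_map]
  rintro ⟨x, -, hx⟩
  cases hx

/-! Soundness. -/

lemma varT_sound {β : List (Symbol T N)} {j m : ℕ} (h : VarT g w β j m) :
    j ≤ m ∧ g.Derives β (inputSlice w j m) := by
  refine VarT.rec (motive_1 := fun _ _ _ => True)
    (motive_2 := fun β j m _ => j ≤ m ∧ g.Derives β (inputSlice w j m))
    ?_ ?_ ?_ ?_ ?_ ?_ ?_ h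
  · intros; trivial
  · intros; trivial
  · intros; trivial
  · intros; trivial
  · intro m _ _
    refine ⟨le_refl _, ?_⟩
    rw [inputSlice_self]
    exact Relation.ReflTransGen.refl
  · intro a β j m _ ha _ _ ih
    obtain ⟨hjm, hd⟩ := ih
    have hjn : j < w.length := by
      exact (List.getElem?_eq_some_iff.mp ha).1
    have haw : w[j] = a := by
      rw [List.getElem?_eq_getElem hjn] at ha
      exact Option.some.inj ha
    refine ⟨by omega, ?_⟩
    rw [inputSlice_cons w hjn (by omega), haw]
    exact hd.append_left [Symbol.terminal a]
  · intro B β k γ j m _ hr _ _ _ ih₁ ih₂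
    obtain ⟨hkj, hd₁⟩ := ih₁
    obtain ⟨hjm, hd₂⟩ := ih₂
    refine ⟨by omega, ?_⟩
    have hstep : g.Produces (Symbol.nonterminal B :: β) (γ ++ β) :=
      ⟨B, γ, [], β, hr, by simp, by simp⟩
    have hcat : g.Derives (γ ++ β) (inputSlice w k j ++ inputSlice w j m) := hd₁.append hd₂
    rw [inputSlice_append w hkj hjm] at hcat
    exact Relation.ReflTransGen.head hstep hcat

/-! Completeness. -/

theorem varT_complete {g : CFG T N} {w : List T} (n : ℕ) (β : List (Symbol T N)) (j m : ℕ)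
    (hjm : j ≤ m) (hmw : m ≤ w.length)
    (hU : VarU g w β j) (hd : DerivesIn g n β (inputSlice w j m)) :
    VarT g w β j m := by
  match β with
  | [] =>
    have hm : m = j := by
      have hnil := derivesIn_nil hd
      have := congrArg List.length hnil.symm
      rw [inputSlice_length] at this
      simp at this
      omega
    subst hm
    exact VarT.empty hU
  | Symbol.terminal a :: β' =>
    obtain ⟨n₁, n₂, s₁, s₂, hn, hs, h₁, h₂⟩ :=
      derivesIn_split hd (by simp : Symbol.terminal a :: β' = [Symbol.terminal a] ++ β')
    obtain ⟨hn₁, hs₁⟩ := derivesIn_terminal h₁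
    subst hs₁
    have hne : (inputSlice w j m : List (Symbol T N)) ≠ [] := by
      rw [hs]; simp
    have hlen : 0 < min (m - j) (w.length - j) := by
      have := inputSlice_length (N := N) w j m
      rcases Nat.eq_zero_or_pos (min (m - j) (w.length - j)) with h0 | h0
      · exact absurd (List.eq_nil_of_length_eq_zero (this.trans h0)) hne
      · exact h0
    have hjm' : j < m := by omega
    have hjn : j < w.length := by omega
    rw [inputSlice_cons w hjn hjm'] at hs
    obtain ⟨h1, h2⟩ : w[j] = a ∧ inputSlice w (j + 1) m = s₂ := by simpa using hs
    have haw : a = w[j] := h1.symm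
    have hget : w[j]? = some a := by
      rw [List.getElem?_eq_getElem hjn, haw]
    subst h2
    have hU' : VarU g w β' (j + 1) := VarU.scan hU hget
    have hT := varT_complete n₂ β' (j + 1) m (by omega) hmw hU' h₂
    exact VarT.scan hU hget hT
  | Symbol.nonterminal B :: β' =>
    obtain ⟨n₁, n₂, s₁, s₂, hn, hs, h₁, h₂⟩ :=
      derivesIn_split hd
        (by simp : Symbol.nonterminal B :: β' = [Symbol.nonterminal B] ++ β')
    have hlen : s₁.length ≤ m - j := by
      have h := congrArg List.length hs
      rw [inputSlice_length] at h
      simp at h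
      omega
    have hs₁ : s₁ = inputSlice w j (j + s₁.length) := by
      rw [← inputSlice_take w hlen, hs]
      simp
    have hs₂ : s₂ = inputSlice w (j + s₁.length) m := by
      rw [← inputSlice_drop w j m s₁.length, hs]
      simp
    obtain ⟨γ, n₁', hrule, hn₁, hγ⟩ :=
      derivesIn_nonterminal h₁ (by rw [hs₁]; intro A; exact nt_not_mem_inputSlice)
    rw [hs₁] at hγ
    rw [hs₂] at h₂
    set k := j + s₁.length with hk
    have hUγ : VarU g w γ j := VarU.predict hU hrule
    have hTγ : VarT g w γ j k :=
      varT_complete n₁' γ j k (by omega) (by omega) hUγ hγ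
    have hUβ : VarU g w β' k := VarU.complete hU hrule hTγ
    have hTβ : VarT g w β' k m :=
      varT_complete n₂ β' k m (by omega) hmw hUβ h₂
    exact VarT.complete hU hrule hTγ hTβ
termination_by (n, β.length)
decreasing_by
  · simp_wf; omega
  · simp_wf; omega
  · simp_wf; omega

end Aux

/-- the variant is correct: w ∈ L(G) iff [α] ∈ T_{0,n} for some S → α ∈ P. -/
theorem variant_correct (g : CFG T N) (w : List T) :
    w ∈ g.language ↔
      ∃ α, (g.initial, α) ∈ g.rules ∧ VarT g w α 0 w.length := by
  have hslice : (inputSlice w 0 w.length : List (Symbol T N)) = w.map Symbol.terminal := by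
    simp [inputSlice]
  constructor
  · intro hw
    obtain ⟨n, hn⟩ := CFG.Derives.derivesIn hw
    rw [← hslice] at hn
    obtain ⟨γ, n', hrule, _, hγ⟩ :=
      derivesIn_nonterminal hn (fun A => nt_not_mem_inputSlice)
    exact ⟨γ, hrule, varT_complete n' γ 0 w.length (Nat.zero_le _) le_rfl
      (VarU.init hrule) hγ⟩
  · rintro ⟨α, hrule, hT⟩
    obtain ⟨_, hd⟩ := varT_sound hT
    rw [hslice] at hd
    exact Relation.ReflTransGen.head
      ⟨g.initial, α, [], [], hrule, by simp, by simp⟩ hd
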